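/- Let θ₀ ∈ (0, π) and ε > 0. Let y : [0,1] → ℝ², y_t = (cos(tθ₀), sin(tθ₀)), be the circular arc from A = (1,0) to B = (cos θ₀, sin θ₀), and let x : [0,1] → ℝ² be the Lipschitz, piecewise continuously differentiable path which traverses in order: the arc from A to C = (cos(θ₀/2), sin(θ₀/2)) on [0,1/4], the segment from C to D = (1+ε)(cos(θ₀/2), sin(θ₀/2)) on [1/4,1/2], the segment from D back to C on [1/2,3/4], and the arc from C to B on [3/4,1], each at constant speed. Then x and y have the same signature: for every n ≥ 1, ∫_{0<t_1<⋯<t_n<1} x'(t_1) ⊗ ⋯ ⊗ x'(t_n) dt_1⋯dt_n = ∫_{0<t_1<⋯<t_n<1} y'(t_1) ⊗ ⋯ ⊗ y'(t_n) dt_1⋯dt_n, where the derivatives exist outside finitely many points and the integrals are Lebesgue integrals over the open simplex. -/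

import Mathlib

open Real MeasureTheory
open Set

/-- The `n`-th iterated integral `∫_{0<t_1<⋯<t_n<1} z'(t_1) ⊗ ⋯ ⊗ z'(t_n) dt ∈ (ℝ^d)^{⊗n}`
of a path `z : ℝ → ℝ^d`, realized concretely in coordinates: `(ℝ^d)^{⊗n}` is identified
with the Euclidean space with basis indexed by words `I : Fin n → Fin d`.  The derivative
`z'` is the almost-everywhere defined derivative and the integral is a Lebesgue integral
over the open simplex. -/
noncomputable def iterIntTensor (d n : ℕ) (z : ℝ → EuclideanSpace ℝ (Fin d)) :
    EuclideanSpace ℝ (Fin n → Fin d) :=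
  (WithLp.equiv 2 ((Fin n → Fin d) → ℝ)).symm fun I =>
    ∫ u in {u : Fin n → ℝ | (∀ k, u k ∈ Set.Ioo (0 : ℝ) 1) ∧ StrictMono u},
      ∏ k, deriv (fun v => z v (I k)) (u k)

/-- The point `(cos θ, sin θ)` on the unit circle. -/
noncomputable def arcPt (θ : ℝ) : EuclideanSpace ℝ (Fin 2) :=
  (WithLp.equiv 2 (Fin 2 → ℝ)).symm ![cos θ, sin θ]

/-- The Lipschitz, piecewise continuously differentiable path which traverses the
unit-circle arc from `A = (1,0)` to `C = (cos(θ₀/2), sin(θ₀/2))` on `[0,1/4]`, the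
segment from `C` to `D = (1+ε)C` on `[1/4,1/2]`, the segment from `D` back to `C` on
`[1/2,3/4]`, and the arc from `C` to `B = (cos θ₀, sin θ₀)` on `[3/4,1]`, each at
constant speed. -/
noncomputable def spikePath (θ₀ ε : ℝ) (t : ℝ) : EuclideanSpace ℝ (Fin 2) :=
  if t ≤ 1 / 4 then arcPt (2 * t * θ₀)
  else if t ≤ 1 / 2 then (1 + 4 * (t - 1 / 4) * ε) • arcPt (θ₀ / 2)
  else if t ≤ 3 / 4 then (1 + 4 * (3 / 4 - t) * ε) • arcPt (θ₀ / 2)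
  else arcPt (θ₀ / 2 + (4 * t - 3) * θ₀ / 2)

namespace SpikeSig

noncomputable def itInt (f : Fin 2 → ℝ → ℝ) : List (Fin 2) → ℝ → ℝ
  | [], _ => 1
  | i :: l, t => ∫ s in (0:ℝ)..t, f i s * itInt f l s

@[simp] lemma itInt_nil (f : Fin 2 → ℝ → ℝ) (t : ℝ) : itInt f [] t = 1 := rfl

lemma itInt_cons (f : Fin 2 → ℝ → ℝ) (i : Fin 2) (l : List (Fin 2)) (t : ℝ) :
    itInt f (i :: l) t = ∫ s in (0:ℝ)..t, f i s * itInt f l s := rfl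

variable {f : Fin 2 → ℝ → ℝ} {M : ℝ}

lemma integrable_mul_of_cont (hM : 0 ≤ M) (hmeas : ∀ i, Measurable (f i))
    (hbd : ∀ i, ∀ᵐ s : ℝ, |f i s| ≤ M) (i : Fin 2) {g : ℝ → ℝ} (hg : Continuous g)
    (a b : ℝ) : IntervalIntegrable (fun s => f i s * g s) volume a b := by
  obtain ⟨C, hC⟩ : ∃ C, ∀ x ∈ Set.uIcc a b, ‖g x‖ ≤ C :=
    isCompact_uIcc.exists_bound_of_continuousOn hg.continuousOn
  rw [intervalIntegrable_iff]
  refine Integrable.mono' (g := fun _ => M * C) ?_ ?_ ?_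
  · refine integrableOn_const (ne_of_lt ?_) enorm_ne_top
    exact measure_Ioc_lt_top
  · exact ((hmeas i).mul hg.measurable).aestronglyMeasurable
  · filter_upwards [ae_restrict_mem measurableSet_uIoc, ae_restrict_of_ae (hbd i)] with s hs hb
    have hsu : s ∈ Set.uIcc a b := Set.uIoc_subset_uIcc hs
    have : ‖f i s * g s‖ = |f i s| * ‖g s‖ := by rw [norm_mul]; rfl
    rw [this]
    exact mul_le_mul hb (hC s hsu) (norm_nonneg _) hM

lemma itInt_continuous (hM : 0 ≤ M) (hmeas : ∀ i, Measurable (f i))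
    (hbd : ∀ i, ∀ᵐ s : ℝ, |f i s| ≤ M) : ∀ l : List (Fin 2), Continuous (itInt f l) := by
  intro l
  induction l with
  | nil => exact continuous_const
  | cons i l ih =>
    have : itInt f (i :: l) = fun t => ∫ s in (0:ℝ)..t, f i s * itInt f l s := rfl
    rw [this]
    exact intervalIntegral.continuous_primitive
      (fun a b => integrable_mul_of_cont hM hmeas hbd i ih a b) 0

lemma itInt_integrable (hM : 0 ≤ M) (hmeas : ∀ i, Measurable (f i))
    (hbd : ∀ i, ∀ᵐ s : ℝ, |f i s| ≤ M) (i : Fin 2) (l : List (Fin 2)) (a b : ℝ) :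
    IntervalIntegrable (fun s => f i s * itInt f l s) volume a b :=
  integrable_mul_of_cont hM hmeas hbd i (itInt_continuous hM hmeas hbd l) a b

/-- Master right-FTC lemma: the primitive of `h` has right-derivative `ψ t` at `t`
provided `h = ψ` on an interval `(t, c)` to the right of `t` and `ψ` is continuous. -/
lemma hasDerivWithinAt_primitive_right {h ψ : ℝ → ℝ}
    (hint : ∀ a b, IntervalIntegrable h volume a b) (hψ : Continuous ψ)
    {t c : ℝ} (htc : t < c) (heq : ∀ s, t < s → s < c → h s = ψ s) :
    HasDerivWithinAt (fun u => ∫ s in (0:ℝ)..u, h s) (ψ t) (Set.Ici t) t := by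
  have hg : HasDerivWithinAt
      (fun u => (∫ s in (0:ℝ)..t, h s) + ∫ s in t..u, ψ s) (ψ t) (Set.Ici t) t := by
    have hd : HasDerivAt (fun u => ∫ s in t..u, ψ s) (ψ t) t :=
      intervalIntegral.integral_hasDerivAt_right (hψ.intervalIntegrable t t)
        hψ.stronglyMeasurable.stronglyMeasurableAtFilter hψ.continuousAt
    exact (hd.const_add _).hasDerivWithinAt
  refine hg.congr_of_eventuallyEq ?_ ?_
  · have hmem : Set.Ico t c ∈ nhdsWithin t (Set.Ici t) := by
      rw [← Set.Ici_inter_Iio]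
      exact Filter.inter_mem self_mem_nhdsWithin
        (mem_nhdsWithin_of_mem_nhds (Iio_mem_nhds htc))
    filter_upwards [hmem] with u hu
    have h1 : ∫ s in (0:ℝ)..u, h s = (∫ s in (0:ℝ)..t, h s) + ∫ s in t..u, h s :=
      (intervalIntegral.integral_add_adjacent_intervals (hint 0 t) (hint t u)).symm
    have h2 : ∫ s in t..u, h s = ∫ s in t..u, ψ s := by
      apply intervalIntegral.integral_congr_ae
      have hae : ∀ᵐ x : ℝ, x ≠ u := by
        refine (MeasureTheory.ae_iff).2 ?_
        simp only [ne_eq, not_not]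
        simpa using measure_singleton u
      filter_upwards [hae] with x hx hxmem
      rw [Set.uIoc_of_le hu.1] at hxmem
      exact heq x hxmem.1 (lt_of_lt_of_le (lt_of_le_of_ne hxmem.2 hx) (le_of_lt hu.2))
    rw [h1, h2]
  · simp

lemma pi_eval_null {n : ℕ} (k : Fin n) {N : Set ℝ} (hN : volume N = 0) :
    (volume : Measure (Fin n → ℝ)) (Function.eval k ⁻¹' N) = 0 := by
  match n, k with
  | n + 1, k =>
    obtain ⟨N', hsub, hmeas', hnull⟩ := exists_measurable_superset_of_null hN
    have hmp := measurePreserving_piFinSuccAbove (fun _ : Fin (n + 1) => (volume : Measure ℝ)) k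
    have hpre : Function.eval k ⁻¹' N'
        = (MeasurableEquiv.piFinSuccAbove (fun _ : Fin (n + 1) => ℝ) k) ⁻¹' (N' ×ˢ Set.univ) := by
      ext u
      simp [MeasurableEquiv.piFinSuccAbove_apply, Function.eval]
    refine measure_mono_null (Set.preimage_mono hsub) ?_
    rw [volume_pi, hpre, hmp.measure_preimage (hmeas'.prod MeasurableSet.univ).nullMeasurableSet,
      Measure.prod_prod, hnull, zero_mul]


lemma snoc_mem_simplex_iff {n : ℕ} (b t : ℝ) (v : Fin n → ℝ) :
    (Fin.snoc v t ∈ {u : Fin (n+1) → ℝ | (∀ k, u k ∈ Set.Ioo (0:ℝ) b) ∧ StrictMono u})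
      ↔ (t ∈ Set.Ioo (0:ℝ) b ∧ ((∀ k, v k ∈ Set.Ioo (0:ℝ) t) ∧ StrictMono v)) := by
  constructor
  · rintro ⟨hio, hsm⟩
    have hvt : ∀ k : Fin n, v k < t := by
      intro k
      have := hsm (Fin.castSucc_lt_last k)
      simpa [Fin.snoc_castSucc, Fin.snoc_last] using this
    refine ⟨by simpa [Fin.snoc_last] using hio (Fin.last n), fun k => ?_, fun a c hac => ?_⟩
    · have := hio k.castSucc
      simp only [Fin.snoc_castSucc] at this
      exact ⟨this.1, hvt k⟩
    · have := hsm (Fin.castSucc_lt_castSucc_iff.2 hac)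
      simpa [Fin.snoc_castSucc] using this
  · rintro ⟨ht, hv, hsm⟩
    constructor
    · intro k
      induction k using Fin.lastCases with
      | last => simpa [Fin.snoc_last] using ht
      | cast k =>
        have := hv k
        simp only [Fin.snoc_castSucc]
        exact ⟨this.1, this.2.trans ht.2⟩
    · intro a c hac
      induction c using Fin.lastCases with
      | last =>
        induction a using Fin.lastCases with
        | last => exact absurd hac (lt_irrefl _)
        | cast a =>
          simpa [Fin.snoc_castSucc, Fin.snoc_last] using (hv a).2
      | cast c =>
        induction a using Fin.lastCases with
        | last => exact absurd (hac.trans_le (Fin.le_last _)) (lt_irrefl _)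
        | cast a =>
          have := hsm (Fin.castSucc_lt_castSucc_iff.1 hac)
          simpa [Fin.snoc_castSucc] using this

lemma simplex_measurable (n : ℕ) (b : ℝ) :
    MeasurableSet {u : Fin n → ℝ | (∀ k, u k ∈ Set.Ioo (0:ℝ) b) ∧ StrictMono u} := by
  rw [Set.setOf_and]
  apply MeasurableSet.inter
  · rw [Set.setOf_forall]
    exact MeasurableSet.iInter fun k =>
      measurableSet_preimage (measurable_pi_apply k) measurableSet_Ioo
  · have : {u : Fin n → ℝ | StrictMono u}
        = ⋂ (p : Fin n × Fin n) (_ : p.1 < p.2), {u : Fin n → ℝ | u p.1 < u p.2} := by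
      ext u
      simp only [Set.mem_setOf_eq, Set.mem_iInter]
      exact ⟨fun h p hp => h hp, fun h a c hac => h (a, c) hac⟩
    rw [this]
    exact MeasurableSet.iInter fun p => MeasurableSet.iInter fun _ =>
      measurableSet_lt (measurable_pi_apply _) (measurable_pi_apply _)

lemma bridge (hM : 0 ≤ M) (hmeas : ∀ i, Measurable (f i))
    (hbd : ∀ i, ∀ᵐ s : ℝ, |f i s| ≤ M) :
    ∀ (n : ℕ) (w : Fin n → Fin 2) (b : ℝ), 0 ≤ b →
      (∫ u in {u : Fin n → ℝ | (∀ k, u k ∈ Set.Ioo (0:ℝ) b) ∧ StrictMono u},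
        ∏ k, f (w k) (u k)) = itInt f (List.ofFn w).reverse b := by
  intro n
  induction n with
  | zero =>
    intro w b hb
    have huniv : {u : Fin 0 → ℝ | (∀ k, u k ∈ Set.Ioo (0:ℝ) b) ∧ StrictMono u} = Set.univ :=
      Set.eq_univ_of_forall fun u => ⟨fun k => k.elim0, fun i j _ => i.elim0⟩
    rw [huniv, Measure.restrict_univ]
    simp only [Finset.univ_eq_empty, Finset.prod_empty, List.ofFn_zero, List.reverse_nil,
      itInt_nil]
    rw [integral_const, smul_eq_mul, mul_one]
    rw [volume_pi, measureReal_def, Measure.pi_univ]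
    simp
  | succ n IH =>
    intro w b hb
    set S : Set (Fin (n+1) → ℝ) :=
      {u : Fin (n+1) → ℝ | (∀ k, u k ∈ Set.Ioo (0:ℝ) b) ∧ StrictMono u} with hSdef
    have hSmeas : MeasurableSet S := simplex_measurable (n+1) b
    set G : (Fin (n+1) → ℝ) → ℝ := fun u => ∏ k, f (w k) (u k) with hGdef
    have hGmeas : Measurable G :=
      Finset.measurable_prod _ fun k _ => (hmeas (w k)).comp (measurable_pi_apply k)
    set e := MeasurableEquiv.piFinSuccAbove (fun _ : Fin (n+1) => ℝ) (Fin.last n) with hedef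
    have hmp : MeasurePreserving (⇑e.symm)
        ((volume : Measure ℝ).prod (volume : Measure (Fin n → ℝ))) volume := by
      have h0 := (measurePreserving_piFinSuccAbove
        (fun _ : Fin (n+1) => (volume : Measure ℝ)) (Fin.last n)).symm
      rw [volume_pi, volume_pi]
      exact h0
    have hsnoc : ∀ (t : ℝ) (v : Fin n → ℝ), e.symm (t, v) = Fin.snoc v t := by
      intro t v
      rw [hedef, MeasurableEquiv.piFinSuccAbove_symm_apply]
      exact Fin.insertNth_last' t v
    set T : ℝ → Set (Fin n → ℝ) :=
      fun t => {v : Fin n → ℝ | (∀ k, v k ∈ Set.Ioo (0:ℝ) t) ∧ StrictMono v} with hTdef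
    have key : ∀ (t : ℝ) (v : Fin n → ℝ),
        S.indicator G (e.symm (t, v))
          = (Set.Ioo (0:ℝ) b).indicator (fun t' =>
              (T t').indicator
               (fun v' => (∏ k : Fin n, f (w k.castSucc) (v' k)) * f (w (Fin.last n)) t') v) t := by
      intro t v
      rw [hsnoc]
      by_cases ht : t ∈ Set.Ioo (0:ℝ) b
      · rw [Set.indicator_of_mem ht]
        by_cases hv : v ∈ T t
        · rw [Set.indicator_of_mem hv,
            Set.indicator_of_mem (show _ ∈ S from (snoc_mem_simplex_iff b t v).2 ⟨ht, hv⟩)]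
          rw [hGdef]
          simp only
          rw [Fin.prod_univ_castSucc]
          congr 1
          · exact Finset.prod_congr rfl fun k _ => by rw [Fin.snoc_castSucc]
          · rw [Fin.snoc_last]
        · rw [Set.indicator_of_notMem hv, Set.indicator_of_notMem]
          intro hmem
          exact hv ((snoc_mem_simplex_iff b t v).1 hmem).2
      · rw [Set.indicator_of_notMem ht, Set.indicator_of_notMem]
        intro hmem
        exact ht ((snoc_mem_simplex_iff b t v).1 hmem).1
    set NA : Set ℝ := ⋂ i, {s : ℝ | |f i s| ≤ M} with hNAdef
    have hNAc : volume NAᶜ = 0 := by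
      rw [hNAdef, Set.compl_iInter]
      refine measure_iUnion_null fun i => ?_
      rw [Set.compl_setOf]
      exact MeasureTheory.ae_iff.1 (hbd i)
    have hNAmem : ∀ {s : ℝ}, s ∈ NA → ∀ i, |f i s| ≤ M := fun hs i => Set.mem_iInter.1 hs i
    have h1 : ∀ᵐ p : ℝ × (Fin n → ℝ) ∂((volume : Measure ℝ).prod volume), p.1 ∈ NA := by
      rw [MeasureTheory.ae_iff]
      have hset : {p : ℝ × (Fin n → ℝ) | ¬ p.1 ∈ NA} = NAᶜ ×ˢ (Set.univ : Set (Fin n → ℝ)) := by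
        ext p; simp [Set.mem_prod]
      rw [hset, Measure.prod_prod, hNAc, zero_mul]
    have h2 : ∀ᵐ p : ℝ × (Fin n → ℝ) ∂((volume : Measure ℝ).prod volume), ∀ k, p.2 k ∈ NA := by
      rw [MeasureTheory.ae_all_iff]
      intro k
      rw [MeasureTheory.ae_iff]
      have hset : {p : ℝ × (Fin n → ℝ) | ¬ p.2 k ∈ NA}
          = (Set.univ : Set ℝ) ×ˢ (Function.eval k ⁻¹' NAᶜ) := by
        ext p; simp [Function.eval]
      rw [hset, Measure.prod_prod, pi_eval_null k hNAc, mul_zero]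
    have hint : Integrable (fun p : ℝ × (Fin n → ℝ) => S.indicator G (e.symm p))
        ((volume : Measure ℝ).prod (volume : Measure (Fin n → ℝ))) := by
      have hBnd : Integrable
          (((Set.Ioo (0:ℝ) b) ×ˢ (Set.univ.pi fun _ : Fin n => Set.Ioo (0:ℝ) b)).indicator
            (fun _ => M ^ (n+1)))
          ((volume : Measure ℝ).prod (volume : Measure (Fin n → ℝ))) := by
        rw [integrable_indicator_iff
          (measurableSet_Ioo.prod (MeasurableSet.univ_pi fun _ => measurableSet_Ioo))]
        refine integrableOn_const (ne_of_lt ?_) (by simp)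
        rw [Measure.prod_prod]
        refine ENNReal.mul_lt_top measure_Ioo_lt_top ?_
        rw [volume_pi, Measure.pi_pi]
        exact ENNReal.prod_lt_top fun _ _ => measure_Ioo_lt_top
      refine hBnd.mono' ((hGmeas.indicator hSmeas).comp e.symm.measurable).aestronglyMeasurable ?_
      filter_upwards [h1, h2] with p hp1 hp2
      obtain ⟨t, v⟩ := p
      by_cases hmemS : e.symm (t, v) ∈ S
      · have hS' := hmemS
        rw [hsnoc] at hS'
        obtain ⟨ht, hv, -⟩ := (snoc_mem_simplex_iff b t v).1 hS'
        have hrect : (t, v) ∈ (Set.Ioo (0:ℝ) b) ×ˢ (Set.univ.pi fun _ : Fin n => Set.Ioo (0:ℝ) b) :=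
          ⟨ht, Set.mem_univ_pi.2 fun k => ⟨(hv k).1, (hv k).2.trans ht.2⟩⟩
        rw [Set.indicator_of_mem hmemS, Set.indicator_of_mem hrect, Real.norm_eq_abs, hsnoc,
          hGdef]
        simp only
        rw [Finset.abs_prod]
        have hle : ∀ k : Fin (n+1), k ∈ Finset.univ →
            |f (w k) (Fin.snoc (α := fun _ => ℝ) v t k)| ≤ M := by
          intro k _
          induction k using Fin.lastCases with
          | last => rw [Fin.snoc_last]; exact hNAmem hp1 _
          | cast k => rw [Fin.snoc_castSucc]; exact hNAmem (hp2 k) _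
        refine le_trans (Finset.prod_le_prod (fun k _ => abs_nonneg _) hle) ?_
        rw [Finset.prod_const, Finset.card_univ, Fintype.card_fin]
      · rw [Set.indicator_of_notMem hmemS]
        simp only [norm_zero]
        exact Set.indicator_nonneg (fun _ _ => pow_nonneg hM _) _
    have hTmeas : ∀ t : ℝ, MeasurableSet (T t) := fun t => simplex_measurable n t
    calc (∫ u in S, G u)
        = ∫ u, S.indicator G u := (integral_indicator hSmeas).symm
      _ = ∫ p : ℝ × (Fin n → ℝ), S.indicator G (e.symm p)
            ∂((volume : Measure ℝ).prod (volume : Measure (Fin n → ℝ))) :=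
          (hmp.integral_comp e.symm.measurableEmbedding _).symm
      _ = ∫ t : ℝ, ∫ v : Fin n → ℝ, S.indicator G (e.symm (t, v)) :=
          MeasureTheory.integral_prod _ hint
      _ = ∫ t : ℝ, (Set.Ioo (0:ℝ) b).indicator
            (fun t' => f (w (Fin.last n)) t'
              * itInt f (List.ofFn fun k : Fin n => w k.castSucc).reverse t') t := by
          refine integral_congr_ae (Filter.Eventually.of_forall fun t => ?_)
          have hfun : (fun v : Fin n → ℝ => S.indicator G (e.symm (t, v)))
              = fun v => (Set.Ioo (0:ℝ) b).indicator (fun t' =>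
                  (T t').indicator
                   (fun v' => (∏ k : Fin n, f (w k.castSucc) (v' k)) * f (w (Fin.last n)) t') v) t :=
            funext fun v => key t v
          beta_reduce
          rw [hfun]
          by_cases ht : t ∈ Set.Ioo (0:ℝ) b
          · simp only [Set.indicator_of_mem ht]
            rw [integral_indicator (hTmeas t), integral_mul_const,
              IH (fun k => w k.castSucc) t (le_of_lt ht.1)]
            exact mul_comm _ _
          · simp only [Set.indicator_of_notMem ht]
            exact integral_zero _ _
      _ = ∫ t in Set.Ioo (0:ℝ) b, f (w (Fin.last n)) t
            * itInt f (List.ofFn fun k : Fin n => w k.castSucc).reverse t :=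
          integral_indicator measurableSet_Ioo
      _ = ∫ t in Set.Ioc (0:ℝ) b, f (w (Fin.last n)) t
            * itInt f (List.ofFn fun k : Fin n => w k.castSucc).reverse t :=
          integral_Ioc_eq_integral_Ioo.symm
      _ = ∫ t in (0:ℝ)..b, f (w (Fin.last n)) t
            * itInt f (List.ofFn fun k : Fin n => w k.castSucc).reverse t :=
          (intervalIntegral.integral_of_le hb).symm
      _ = itInt f (List.ofFn w).reverse b := by
          have hlist : (List.ofFn w).reverse
              = w (Fin.last n) :: (List.ofFn fun k : Fin n => w k.castSucc).reverse := by
            rw [List.ofFn_succ', List.concat_eq_append, List.reverse_append]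
            simp
          rw [hlist, itInt_cons]


lemma itInt_hasDerivAt (hM : 0 ≤ M) (hmeas : ∀ i, Measurable (f i))
    (hbd : ∀ i, ∀ᵐ s : ℝ, |f i s| ≤ M) (hcont : ∀ i, Continuous (f i))
    (i : Fin 2) (l : List (Fin 2)) (x : ℝ) :
    HasDerivAt (itInt f (i :: l)) (f i x * itInt f l x) x := by
  have hc : Continuous (fun s => f i s * itInt f l s) :=
    (hcont i).mul (itInt_continuous hM hmeas hbd l)
  have hre : itInt f (i :: l) = fun t => ∫ s in (0:ℝ)..t, f i s * itInt f l s := rfl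
  rw [hre]
  exact intervalIntegral.integral_hasDerivAt_right (hc.intervalIntegrable _ _)
    hc.stronglyMeasurable.stronglyMeasurableAtFilter hc.continuousAt

lemma itInt_hasDerivWithinAt_right (hM : 0 ≤ M) (hmeas : ∀ i, Measurable (f i))
    (hbd : ∀ i, ∀ᵐ s : ℝ, |f i s| ≤ M) (i : Fin 2) (l : List (Fin 2)) {ψ : ℝ → ℝ}
    (hψ : Continuous ψ) {t c : ℝ} (htc : t < c)
    (heq : ∀ s, t < s → s < c → f i s * itInt f l s = ψ s) :
    HasDerivWithinAt (itInt f (i :: l)) (ψ t) (Set.Ici t) t := by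
  have hre : itInt f (i :: l) = fun u => ∫ s in (0:ℝ)..u, f i s * itInt f l s := rfl
  rw [hre]
  exact hasDerivWithinAt_primitive_right
    (fun a b => itInt_integrable hM hmeas hbd i l a b) hψ htc heq

/-! ### Path-specific computations -/

noncomputable def DD (i : Fin 2) (θ : ℝ) : ℝ := ![-Real.sin θ, Real.cos θ] i

lemma arcPt_apply (θ : ℝ) (i : Fin 2) : arcPt θ i = ![Real.cos θ, Real.sin θ] i := rfl

lemma hasDerivAt_arcPt (i : Fin 2) (θ : ℝ) :
    HasDerivAt (fun θ' => arcPt θ' i) (DD i θ) θ := by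
  revert i
  rw [Fin.forall_fin_two]
  constructor <;>
    simp only [arcPt_apply, DD, Matrix.cons_val_zero, Matrix.cons_val_one, Matrix.head_cons]
  · exact Real.hasDerivAt_cos θ
  · exact Real.hasDerivAt_sin θ

lemma hasDerivAt_arc_comp (i : Fin 2) {gg : ℝ → ℝ} {g' t : ℝ} (hg : HasDerivAt gg g' t) :
    HasDerivAt (fun v => arcPt (gg v) i) (DD i (gg t) * g') t := by
  have := (hasDerivAt_arcPt i (gg t)).comp t hg
  exact this

lemma DD_abs_le (i : Fin 2) (θ : ℝ) : |DD i θ| ≤ 1 := by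
  revert i
  rw [Fin.forall_fin_two]
  constructor <;>
    simp only [DD, Matrix.cons_val_zero, Matrix.cons_val_one, Matrix.head_cons, abs_neg]
  · exact Real.abs_sin_le_one θ
  · exact Real.abs_cos_le_one θ

lemma DD_cont (i : Fin 2) : Continuous (DD i) := by
  revert i
  rw [Fin.forall_fin_two]
  refine ⟨?_, ?_⟩
  · have h : DD 0 = fun θ => -Real.sin θ := by
      funext θ; simp [DD]
    rw [h]; exact Real.continuous_sin.neg
  · have h : DD 1 = fun θ => Real.cos θ := by
      funext θ; simp [DD]
    rw [h]; exact Real.continuous_cos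

section Paths

variable (θ₀ ε : ℝ)

/-- The coordinate derivative functions of the plain arc `t ↦ arcPt (t θ₀)`. -/
noncomputable def gfun (i : Fin 2) (t : ℝ) : ℝ := DD i (t * θ₀) * θ₀

/-- The coordinate derivative functions of the spike path. -/
noncomputable def fxfun (i : Fin 2) (t : ℝ) : ℝ := deriv (fun v => spikePath θ₀ ε v i) t

/-- Coordinates of the spike direction. -/
noncomputable def ee (i : Fin 2) : ℝ := arcPt (θ₀ / 2) i

lemma hasDerivAt_y (i : Fin 2) (t : ℝ) :
    HasDerivAt (fun v => arcPt (v * θ₀) i) (gfun θ₀ i t) t :=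
  hasDerivAt_arc_comp i (hasDerivAt_mul_const θ₀)

lemma gfun_eq_deriv (i : Fin 2) (t : ℝ) :
    deriv (fun v => arcPt (v * θ₀) i) t = gfun θ₀ i t := (hasDerivAt_y θ₀ i t).deriv

lemma gfun_cont (i : Fin 2) : Continuous (gfun θ₀ i) :=
  ((DD_cont i).comp (continuous_id.mul continuous_const)).mul continuous_const

lemma gfun_abs_le (hθ : 0 ≤ θ₀) (i : Fin 2) (t : ℝ) : |gfun θ₀ i t| ≤ θ₀ := by
  rw [gfun, abs_mul, abs_of_nonneg hθ]
  calc |DD i (t * θ₀)| * θ₀ ≤ 1 * θ₀ := by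
        exact mul_le_mul_of_nonneg_right (DD_abs_le _ _) hθ
    _ = θ₀ := one_mul θ₀

lemma ee_abs_le (i : Fin 2) : |ee θ₀ i| ≤ 1 := by
  revert i
  rw [Fin.forall_fin_two]
  constructor <;>
    simp only [ee, arcPt_apply, Matrix.cons_val_zero, Matrix.cons_val_one, Matrix.head_cons]
  · exact Real.abs_cos_le_one _
  · exact Real.abs_sin_le_one _

lemma fx_eq1 {t : ℝ} (ht : t < 1/4) (i : Fin 2) :
    fxfun θ₀ ε i t = 2 * gfun θ₀ i (2 * t) := by
  have hev : (fun v => spikePath θ₀ ε v i) =ᶠ[nhds t] (fun v => arcPt (2 * v * θ₀) i) := by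
    filter_upwards [Iio_mem_nhds ht] with v hv
    rw [spikePath, if_pos (le_of_lt hv)]
  rw [fxfun, hev.deriv_eq]
  have h1 : HasDerivAt (fun v : ℝ => 2 * v * θ₀) (2 * θ₀) t := by
    have he : (fun v : ℝ => 2 * v * θ₀) = fun v => v * (2 * θ₀) := by funext v; ring
    rw [he]; exact hasDerivAt_mul_const _
  rw [(hasDerivAt_arc_comp i h1).deriv, gfun]
  ring_nf

lemma fx_eq2 {t : ℝ} (ht1 : 1/4 < t) (ht2 : t < 1/2) (i : Fin 2) :
    fxfun θ₀ ε i t = 4 * ε * ee θ₀ i := by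
  have hev : (fun v => spikePath θ₀ ε v i)
      =ᶠ[nhds t] (fun v => (1 + 4 * (v - 1/4) * ε) * ee θ₀ i) := by
    filter_upwards [Ioo_mem_nhds ht1 ht2] with v hv
    rw [spikePath, if_neg (not_le.2 hv.1), if_pos (le_of_lt hv.2)]
    rw [PiLp.smul_apply, smul_eq_mul, ee]
  rw [fxfun, hev.deriv_eq]
  have h1 : HasDerivAt (fun v : ℝ => (1 + 4 * (v - 1/4) * ε) * ee θ₀ i)
      (4 * ε * ee θ₀ i) t := by
    have he : (fun v : ℝ => (1 + 4 * (v - 1/4) * ε) * ee θ₀ i)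
        = fun v => v * (4 * ε * ee θ₀ i) + (ee θ₀ i - ε * ee θ₀ i) := by funext v; ring
    rw [he]; exact (hasDerivAt_mul_const _).add_const _
  exact h1.deriv

lemma fx_eq3 {t : ℝ} (ht1 : 1/2 < t) (ht2 : t < 3/4) (i : Fin 2) :
    fxfun θ₀ ε i t = -(4 * ε) * ee θ₀ i := by
  have hev : (fun v => spikePath θ₀ ε v i)
      =ᶠ[nhds t] (fun v => (1 + 4 * (3/4 - v) * ε) * ee θ₀ i) := by
    filter_upwards [Ioo_mem_nhds ht1 ht2] with v hv
    rw [spikePath, if_neg (by linarith [hv.1] : ¬ v ≤ 1/4), if_neg (not_le.2 hv.1),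
      if_pos (le_of_lt hv.2)]
    rw [PiLp.smul_apply, smul_eq_mul, ee]
  rw [fxfun, hev.deriv_eq]
  have h1 : HasDerivAt (fun v : ℝ => (1 + 4 * (3/4 - v) * ε) * ee θ₀ i)
      (-(4 * ε) * ee θ₀ i) t := by
    have he : (fun v : ℝ => (1 + 4 * (3/4 - v) * ε) * ee θ₀ i)
        = fun v => v * (-(4 * ε) * ee θ₀ i) + (ee θ₀ i + 3 * ε * ee θ₀ i) := by funext v; ring
    rw [he]; exact (hasDerivAt_mul_const _).add_const _
  exact h1.deriv

lemma fx_eq4 {t : ℝ} (ht : 3/4 < t) (i : Fin 2) :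
    fxfun θ₀ ε i t = 2 * gfun θ₀ i (2 * t - 1) := by
  have hev : (fun v => spikePath θ₀ ε v i)
      =ᶠ[nhds t] (fun v => arcPt (θ₀ / 2 + (4 * v - 3) * θ₀ / 2) i) := by
    filter_upwards [Ioi_mem_nhds ht] with v hv
    rw [Set.mem_Ioi] at hv
    rw [spikePath, if_neg (by linarith : ¬ v ≤ 1/4),
      if_neg (by linarith : ¬ v ≤ 1/2), if_neg (not_le.2 hv)]
  rw [fxfun, hev.deriv_eq]
  have h1 : HasDerivAt (fun v : ℝ => θ₀ / 2 + (4 * v - 3) * θ₀ / 2) (2 * θ₀) t := by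
    have he : (fun v : ℝ => θ₀ / 2 + (4 * v - 3) * θ₀ / 2)
        = fun v => v * (2 * θ₀) + (θ₀ / 2 - 3 * θ₀ / 2) := by funext v; ring
    rw [he]; exact (hasDerivAt_mul_const _).add_const _
  rw [(hasDerivAt_arc_comp i h1).deriv, gfun]
  have harg : θ₀ / 2 + (4 * t - 3) * θ₀ / 2 = (2 * t - 1) * θ₀ := by ring
  rw [harg]
  ring

lemma fx_meas (i : Fin 2) : Measurable (fxfun θ₀ ε i) := measurable_deriv _

lemma fx_bd (hθ : 0 ≤ θ₀) (hε : 0 ≤ ε) (i : Fin 2) :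
    ∀ᵐ s : ℝ, |fxfun θ₀ ε i s| ≤ 2 * θ₀ + 4 * ε := by
  have hfin : volume ({1/4, 1/2, 3/4} : Set ℝ) = 0 :=
    (Set.toFinite _).measure_zero volume
  have hae : ∀ᵐ s : ℝ, s ∉ ({1/4, 1/2, 3/4} : Set ℝ) :=
    measure_eq_zero_iff_ae_notMem.1 hfin
  filter_upwards [hae] with s hs
  simp only [Set.mem_insert_iff, Set.mem_singleton_iff, not_or] at hs
  obtain ⟨h1, h2, h3⟩ := hs
  have habs2 : |2 * gfun θ₀ i (2 * s)| ≤ 2 * θ₀ + 4 * ε := by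
    rw [abs_mul]
    have := gfun_abs_le θ₀ hθ i (2 * s)
    rw [abs_two]
    nlinarith
  have habs2' : ∀ u : ℝ, |2 * gfun θ₀ i u| ≤ 2 * θ₀ + 4 * ε := by
    intro u
    rw [abs_mul, abs_two]
    have := gfun_abs_le θ₀ hθ i u
    nlinarith
  have habsee : |4 * ε * ee θ₀ i| ≤ 2 * θ₀ + 4 * ε := by
    rw [abs_mul]
    have h4 : |(4:ℝ) * ε| = 4 * ε := abs_of_nonneg (by linarith)
    rw [h4]
    have := ee_abs_le θ₀ i
    nlinarith
  rcases lt_or_gt_of_ne h1 with ht | ht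
  · rw [fx_eq1 θ₀ ε ht i]; exact habs2' _
  · rcases lt_or_gt_of_ne h2 with ht2 | ht2
    · rw [fx_eq2 θ₀ ε ht ht2 i]; exact habsee
    · rcases lt_or_gt_of_ne h3 with ht3 | ht3
      · rw [fx_eq3 θ₀ ε ht2 ht3 i]
        rw [show -(4 * ε) * ee θ₀ i = -(4 * ε * ee θ₀ i) by ring, abs_neg]
        exact habsee
      · rw [fx_eq4 θ₀ ε ht3 i]; exact habs2' _

lemma g_bd (hθ : 0 ≤ θ₀) (hε : 0 ≤ ε) (i : Fin 2) :
    ∀ᵐ s : ℝ, |gfun θ₀ i s| ≤ 2 * θ₀ + 4 * ε := by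
  refine Filter.Eventually.of_forall fun s => ?_
  have := gfun_abs_le θ₀ hθ i s
  linarith

lemma L1 (hθ : 0 ≤ θ₀) (hε : 0 ≤ ε) :
    ∀ (l : List (Fin 2)), ∀ t ∈ Set.Icc (0:ℝ) (1/4),
      itInt (fxfun θ₀ ε) l t = itInt (gfun θ₀) l (2 * t) := by
  have hM : (0:ℝ) ≤ 2*θ₀ + 4*ε := by linarith
  have hgm : ∀ i, Measurable (gfun θ₀ i) := fun i => (gfun_cont θ₀ i).measurable
  intro l
  induction l with
  | nil => intro t _; rfl
  | cons i l ih =>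
    refine eq_of_has_deriv_right_eq (a := 0) (b := 1/4)
      (f' := fun y => 2 * gfun θ₀ i (2*y) * itInt (gfun θ₀) l (2*y))
      (fun y hy => ?_) (fun y hy => ?_) ?_ ?_ ?_
    · have hψc : Continuous fun s : ℝ => 2 * gfun θ₀ i (2*s) * itInt (fxfun θ₀ ε) l s :=
        (continuous_const.mul ((gfun_cont θ₀ i).comp (continuous_const.mul continuous_id))).mul
          (itInt_continuous hM (fx_meas θ₀ ε) (fx_bd θ₀ ε hθ hε) l)
      have hD := itInt_hasDerivWithinAt_right hM (fx_meas θ₀ ε) (fx_bd θ₀ ε hθ hε) i l hψc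
        hy.2 (fun s _ hs2 => by rw [fx_eq1 θ₀ ε hs2 i])
      rw [ih y ⟨hy.1, le_of_lt hy.2⟩] at hD
      exact hD
    · have h2 : HasDerivAt (fun u : ℝ => 2 * u) 2 y := by
        have h := (hasDerivAt_id y).const_mul (2:ℝ)
        simpa using h
      have hdg := (itInt_hasDerivAt hM hgm (g_bd θ₀ ε hθ hε) (gfun_cont θ₀) i l (2*y)).comp y h2
      have hval : gfun θ₀ i (2*y) * itInt (gfun θ₀) l (2*y) * 2
          = 2 * gfun θ₀ i (2*y) * itInt (gfun θ₀) l (2*y) := by ring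
      rw [hval] at hdg
      exact hdg.hasDerivWithinAt
    · exact (itInt_continuous hM (fx_meas θ₀ ε) (fx_bd θ₀ ε hθ hε) (i::l)).continuousOn
    · exact ((itInt_continuous hM hgm (g_bd θ₀ ε hθ hε) (i::l)).comp
        (continuous_const.mul continuous_id)).continuousOn
    · show itInt (fxfun θ₀ ε) (i::l) 0 = itInt (gfun θ₀) (i::l) (2*0)
      rw [itInt_cons, itInt_cons, mul_zero, intervalIntegral.integral_same,
        intervalIntegral.integral_same]

/-- The radial coordinate along the spike. -/
noncomputable def rho (t : ℝ) : ℝ :=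
  if t ≤ 1/2 then 1 + 4*(t - 1/4)*ε else 1 + 4*(3/4 - t)*ε

/-- The `P` polynomials: `P l` is the unique solution of `P (i::l)' = ee i * P l`,
`P (i::l) 1 = itInt fx (i::l) (1/4)`. -/
noncomputable def PP : List (Fin 2) → ℝ → ℝ
  | [] => fun _ => 1
  | i :: l => fun r => itInt (fxfun θ₀ ε) (i :: l) (1/4) + ee θ₀ i * ∫ v in (1:ℝ)..r, PP l v

lemma PP_cons (i : Fin 2) (l : List (Fin 2)) (r : ℝ) :
    PP θ₀ ε (i :: l) r
      = itInt (fxfun θ₀ ε) (i :: l) (1/4) + ee θ₀ i * ∫ v in (1:ℝ)..r, PP θ₀ ε l v := rfl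

lemma PP_cont : ∀ l : List (Fin 2), Continuous (PP θ₀ ε l) := by
  intro l
  induction l with
  | nil => exact continuous_const
  | cons i l ih =>
    have : PP θ₀ ε (i :: l) = fun r =>
        itInt (fxfun θ₀ ε) (i :: l) (1/4) + ee θ₀ i * ∫ v in (1:ℝ)..r, PP θ₀ ε l v := rfl
    rw [this]
    exact continuous_const.add (continuous_const.mul
      (intervalIntegral.continuous_primitive (fun a b => ih.intervalIntegrable a b) 1))

lemma rho_cont : Continuous (rho ε) := by
  refine Continuous.if_le ?_ ?_ continuous_id continuous_const ?_
  · have he : (fun t : ℝ => 1 + 4*(t - 1/4)*ε) = fun t => t*(4*ε) + (1 - ε) := by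
      funext t; ring
    rw [he]; exact (continuous_id.mul continuous_const).add continuous_const
  · have he : (fun t : ℝ => 1 + 4*(3/4 - t)*ε) = fun t => t*(-(4*ε)) + (1 + 3*ε) := by
      funext t; ring
    rw [he]; exact (continuous_id.mul continuous_const).add continuous_const
  · intro t ht
    rw [ht]; ring

lemma rho_quarter : rho ε (1/4) = 1 := by
  rw [rho, if_pos (by norm_num)]; ring

lemma rho_34 : rho ε (3/4) = 1 := by
  rw [rho, if_neg (by norm_num)]; ring

lemma CC (hθ : 0 ≤ θ₀) (hε : 0 ≤ ε) :
    ∀ (l : List (Fin 2)), ∀ t ∈ Set.Icc (1/4 : ℝ) (3/4),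
      itInt (fxfun θ₀ ε) l t = PP θ₀ ε l (rho ε t) := by
  have hM : (0:ℝ) ≤ 2*θ₀ + 4*ε := by linarith
  intro l
  induction l with
  | nil => intro t _; rfl
  | cons i l ih =>
    have hHd : ∀ r : ℝ, HasDerivAt (fun r' => ∫ v in (1:ℝ)..r', PP θ₀ ε l v)
        (PP θ₀ ε l r) r := fun r =>
      intervalIntegral.integral_hasDerivAt_right ((PP_cont θ₀ ε l).intervalIntegrable _ _)
        (PP_cont θ₀ ε l).stronglyMeasurable.stronglyMeasurableAtFilter
        (PP_cont θ₀ ε l).continuousAt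
    have hfc : ContinuousOn (itInt (fxfun θ₀ ε) (i::l)) (Set.Icc (1/4 : ℝ) (1/2)) :=
      (itInt_continuous hM (fx_meas θ₀ ε) (fx_bd θ₀ ε hθ hε) (i::l)).continuousOn
    have hfc' : ContinuousOn (itInt (fxfun θ₀ ε) (i::l)) (Set.Icc (1/2 : ℝ) (3/4)) :=
      (itInt_continuous hM (fx_meas θ₀ ε) (fx_bd θ₀ ε hθ hε) (i::l)).continuousOn
    have hgc : ∀ s : Set ℝ, ContinuousOn (fun t => PP θ₀ ε (i::l) (rho ε t)) s :=
      fun s => ((PP_cont θ₀ ε (i::l)).comp (rho_cont ε)).continuousOn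
    have step1 : ∀ t ∈ Set.Icc (1/4 : ℝ) (1/2),
        itInt (fxfun θ₀ ε) (i::l) t = PP θ₀ ε (i::l) (rho ε t) := by
      refine eq_of_has_deriv_right_eq (a := 1/4) (b := 1/2)
        (f' := fun y => 4 * ε * ee θ₀ i * PP θ₀ ε l (rho ε y))
        (fun y hy => ?_) (fun y hy => ?_) hfc (hgc _) ?_
      · have hψc : Continuous fun s : ℝ => 4 * ε * ee θ₀ i * itInt (fxfun θ₀ ε) l s :=
          continuous_const.mul (itInt_continuous hM (fx_meas θ₀ ε) (fx_bd θ₀ ε hθ hε) l)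
        have hD := itInt_hasDerivWithinAt_right hM (fx_meas θ₀ ε) (fx_bd θ₀ ε hθ hε) i l hψc
          hy.2 (fun s hs1 hs2 => by rw [fx_eq2 θ₀ ε (lt_of_le_of_lt hy.1 hs1) hs2 i])
        rw [ih y ⟨hy.1, by linarith [hy.2]⟩] at hD
        exact hD
      · have h1 : HasDerivWithinAt (rho ε) (4*ε) (Set.Ici y) y := by
          have haff : HasDerivAt (fun t : ℝ => 1 + 4*(t - 1/4)*ε) (4*ε) y := by
            have he : (fun t : ℝ => 1 + 4*(t - 1/4)*ε) = fun t => t*(4*ε) + (1 - ε) := by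
              funext t; ring
            rw [he]; exact (hasDerivAt_mul_const _).add_const _
          refine haff.hasDerivWithinAt.congr_of_eventuallyEq ?_ ?_
          · filter_upwards [nhdsWithin_le_nhds (Iio_mem_nhds hy.2)] with u hu
            rw [rho, if_pos (le_of_lt hu)]
          · rw [rho, if_pos (le_of_lt hy.2)]
        have h2 := (hHd (rho ε y)).comp_hasDerivWithinAt y h1
        have h3 := (h2.const_mul (ee θ₀ i)).const_add (itInt (fxfun θ₀ ε) (i::l) (1/4))
        have hval : ee θ₀ i * (PP θ₀ ε l (rho ε y) * (4*ε))
            = 4 * ε * ee θ₀ i * PP θ₀ ε l (rho ε y) := by ring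
        rw [hval] at h3
        exact h3
      · rw [rho_quarter, PP_cons, intervalIntegral.integral_same, mul_zero, add_zero]
    have step2 : ∀ t ∈ Set.Icc (1/2 : ℝ) (3/4),
        itInt (fxfun θ₀ ε) (i::l) t = PP θ₀ ε (i::l) (rho ε t) := by
      refine eq_of_has_deriv_right_eq (a := 1/2) (b := 3/4)
        (f' := fun y => -(4 * ε) * ee θ₀ i * PP θ₀ ε l (rho ε y))
        (fun y hy => ?_) (fun y hy => ?_) hfc' (hgc _) ?_
      · have hψc : Continuous fun s : ℝ => -(4 * ε) * ee θ₀ i * itInt (fxfun θ₀ ε) l s :=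
          continuous_const.mul (itInt_continuous hM (fx_meas θ₀ ε) (fx_bd θ₀ ε hθ hε) l)
        have hD := itInt_hasDerivWithinAt_right hM (fx_meas θ₀ ε) (fx_bd θ₀ ε hθ hε) i l hψc
          hy.2 (fun s hs1 hs2 => by rw [fx_eq3 θ₀ ε (lt_of_le_of_lt hy.1 hs1) hs2 i])
        rw [ih y ⟨by linarith [hy.1], le_of_lt hy.2⟩] at hD
        exact hD
      · have h1 : HasDerivWithinAt (rho ε) (-(4*ε)) (Set.Ici y) y := by
          have haff : HasDerivAt (fun t : ℝ => 1 + 4*(3/4 - t)*ε) (-(4*ε)) y := by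
            have he : (fun t : ℝ => 1 + 4*(3/4 - t)*ε) = fun t => t*(-(4*ε)) + (1 + 3*ε) := by
              funext t; ring
            rw [he]; exact (hasDerivAt_mul_const _).add_const _
          refine haff.hasDerivWithinAt.congr ?_ ?_
          · intro u hu
            rw [rho]
            split_ifs with h
            · have hu2 : u = 1/2 := le_antisymm h (le_trans hy.1 hu)
              rw [hu2]; ring
            · rfl
          · rw [rho]
            split_ifs with h
            · have hy2 : y = 1/2 := le_antisymm h hy.1
              rw [hy2]; ring
            · rfl
        have h2 := (hHd (rho ε y)).comp_hasDerivWithinAt y h1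
        have h3 := (h2.const_mul (ee θ₀ i)).const_add (itInt (fxfun θ₀ ε) (i::l) (1/4))
        have hval : ee θ₀ i * (PP θ₀ ε l (rho ε y) * -(4*ε))
            = -(4 * ε) * ee θ₀ i * PP θ₀ ε l (rho ε y) := by ring
        rw [hval] at h3
        exact h3
      · exact step1 (1/2) ⟨by norm_num, le_refl _⟩
    intro t ht
    rcases le_total t (1/2) with h | h
    · exact step1 t ⟨ht.1, h⟩
    · exact step2 t ⟨h, ht.2⟩

lemma L2 (hθ : 0 ≤ θ₀) (hε : 0 ≤ ε) (l : List (Fin 2)) :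
    itInt (fxfun θ₀ ε) l (3/4) = itInt (fxfun θ₀ ε) l (1/4) := by
  have h1 := CC θ₀ ε hθ hε l (3/4) ⟨by norm_num, le_refl _⟩
  have h2 := CC θ₀ ε hθ hε l (1/4) ⟨le_refl _, by norm_num⟩
  rw [h1, h2, rho_34, rho_quarter]

lemma L3 (hθ : 0 ≤ θ₀) (hε : 0 ≤ ε) :
    ∀ (l : List (Fin 2)), ∀ t ∈ Set.Icc (3/4:ℝ) 1,
      itInt (fxfun θ₀ ε) l t = itInt (gfun θ₀) l (2*t - 1) := by
  have hM : (0:ℝ) ≤ 2*θ₀ + 4*ε := by linarith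
  have hgm : ∀ i, Measurable (gfun θ₀ i) := fun i => (gfun_cont θ₀ i).measurable
  intro l
  induction l with
  | nil => intro t _; rfl
  | cons i l ih =>
    refine eq_of_has_deriv_right_eq (a := 3/4) (b := 1)
      (f' := fun y => 2 * gfun θ₀ i (2*y - 1) * itInt (gfun θ₀) l (2*y - 1))
      (fun y hy => ?_) (fun y hy => ?_) ?_ ?_ ?_
    · have hψc : Continuous fun s : ℝ => 2 * gfun θ₀ i (2*s - 1) * itInt (fxfun θ₀ ε) l s :=
        (continuous_const.mul ((gfun_cont θ₀ i).comp
          ((continuous_const.mul continuous_id).sub continuous_const))).mul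
          (itInt_continuous hM (fx_meas θ₀ ε) (fx_bd θ₀ ε hθ hε) l)
      have hD := itInt_hasDerivWithinAt_right hM (fx_meas θ₀ ε) (fx_bd θ₀ ε hθ hε) i l hψc
        (show y < 2 by linarith [hy.2])
        (fun s hs1 _ => by rw [fx_eq4 θ₀ ε (lt_of_le_of_lt hy.1 hs1) i])
      rw [ih y ⟨hy.1, le_of_lt hy.2⟩] at hD
      exact hD
    · have h2 : HasDerivAt (fun u : ℝ => 2*u - 1) 2 y := by
        have he : (fun u : ℝ => 2*u - 1) = fun u => u * 2 + (-1) := by funext u; ring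
        rw [he]
        have := (hasDerivAt_mul_const (x := y) (2:ℝ)).add_const (-1 : ℝ)
        exact this
      have hdg := (itInt_hasDerivAt hM hgm (g_bd θ₀ ε hθ hε) (gfun_cont θ₀) i l (2*y - 1)).comp
        y h2
      have hval : gfun θ₀ i (2*y - 1) * itInt (gfun θ₀) l (2*y - 1) * 2
          = 2 * gfun θ₀ i (2*y - 1) * itInt (gfun θ₀) l (2*y - 1) := by ring
      rw [hval] at hdg
      exact hdg.hasDerivWithinAt
    · exact (itInt_continuous hM (fx_meas θ₀ ε) (fx_bd θ₀ ε hθ hε) (i::l)).continuousOn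
    · exact ((itInt_continuous hM hgm (g_bd θ₀ ε hθ hε) (i::l)).comp
        ((continuous_const.mul continuous_id).sub continuous_const)).continuousOn
    · show itInt (fxfun θ₀ ε) (i::l) (3/4) = itInt (gfun θ₀) (i::l) (2*(3/4) - 1)
      rw [L2 θ₀ ε hθ hε (i::l), L1 θ₀ ε hθ hε (i::l) (1/4) ⟨by norm_num, le_refl _⟩]
      norm_num

end Paths

end SpikeSig

/-- The arc-with-spike path `x` and the plain circular arc `y_t = (cos(tθ₀), sin(tθ₀))`
from `A = (1,0)` to `B = (cos θ₀, sin θ₀)` have the same signature: all their iterated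
integrals coincide. -/
theorem spike_path_same_signature (θ₀ ε : ℝ) (hθ₀ : θ₀ ∈ Set.Ioo (0 : ℝ) π) (hε : 0 < ε)
    (n : ℕ) (hn : 1 ≤ n) :
    iterIntTensor 2 n (spikePath θ₀ ε) =
      iterIntTensor 2 n (fun t => arcPt (t * θ₀)) := by
  have hθ : 0 ≤ θ₀ := le_of_lt hθ₀.1
  have hε' : 0 ≤ ε := le_of_lt hε
  have hM : (0:ℝ) ≤ 2*θ₀ + 4*ε := by linarith
  unfold iterIntTensor
  refine congrArg _ (funext fun I => ?_)
  have hb1 := SpikeSig.bridge (f := SpikeSig.fxfun θ₀ ε) hM (SpikeSig.fx_meas θ₀ ε)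
    (SpikeSig.fx_bd θ₀ ε hθ hε') n I 1 zero_le_one
  have hgm : ∀ i : Fin 2, Measurable (SpikeSig.gfun θ₀ i) :=
    fun i => (SpikeSig.gfun_cont θ₀ i).measurable
  have hb2 := SpikeSig.bridge (f := SpikeSig.gfun θ₀) hM hgm
    (SpikeSig.g_bd θ₀ ε hθ hε') n I 1 zero_le_one
  have hfinal := SpikeSig.L3 θ₀ ε hθ hε' (List.ofFn I).reverse 1 ⟨by norm_num, le_refl 1⟩
  rw [show (2*(1:ℝ) - 1) = 1 by norm_num] at hfinal
  simp only [SpikeSig.gfun_eq_deriv]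
  exact hb1.trans (hfinal.trans hb2.symm)
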